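/- Let z, z' be complex numbers, let μ be a Young diagram with |μ| = m, let n ≥ 0 be such that zz' + n ≠ 0, and let λ be a Young diagram with |λ| = n. Then ∑_{ν : ν ↘ λ} p↑(λ,ν) · ∑_{κ : κ ↗ ν} (dim κ / dim ν) · FS_μ(κ) − FS_μ(λ) = −( m(m−1+zz') / ((n+1)(zz'+n)) ) · FS_μ(λ) + ( (n+1−m) / ((n+1)(zz'+n)) ) · ∑_{μ• : μ• ↗ μ} (z)_{μ/μ•} (z')_{μ/μ•} · FS_{μ•}(λ), where p↑(λ,ν) := (z)_{ν/λ}(z')_{ν/λ} · dim ν / ((zz'+n)(n+1) · dim λ). (This computes the action of T_n − 1 on the Frobenius–Schur function FS_μ, where T_n is the up–down transition operator of the z-measures.) -/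

import Mathlib

/-- `μ ↗ ν` : the Young diagram `ν` is obtained from `μ` by adding one box. -/
def YoungDiagram.Covers (μ ν : YoungDiagram) : Prop :=
  μ ≤ ν ∧ ν.card = μ.card + 1

/-- `dim(μ,λ)`: the number of saturated chains `μ = ν₀ ↗ ν₁ ↗ … ↗ ν_{|λ|-|μ|} = λ`
(the number of standard Young tableaux of skew shape `λ/μ`); it vanishes when `μ ⊄ λ`. -/
noncomputable def YoungDiagram.skewDim (μ l : YoungDiagram) : ℕ :=
  Nat.card {f : Fin (l.card - μ.card + 1) → YoungDiagram //
    f 0 = μ ∧ f (Fin.last _) = l ∧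
    ∀ i : Fin (l.card - μ.card), YoungDiagram.Covers (f i.castSucc) (f i.succ)}

/-- `dim λ`: the number of standard Young tableaux of shape `λ`. -/
noncomputable def YoungDiagram.dim (l : YoungDiagram) : ℕ :=
  YoungDiagram.skewDim ⊥ l

/-- The value `FS_μ(λ)` of the Frobenius–Schur function (as a complex number):
`FS_μ(λ) = n(n-1)⋯(n-m+1) · dim(μ,λ)/dim λ` where `n = |λ|`, `m = |μ|`. -/
noncomputable def YoungDiagram.FS (μ l : YoungDiagram) : ℂ :=
  (∏ i ∈ Finset.range μ.card, ((l.card : ℂ) - (i : ℂ))) * (μ.skewDim l : ℂ) / (l.dim : ℂ)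

/-- `(w)_{λ/μ} = ∏_{(i,j) ∈ λ∖μ} (w + j - i)`, the product of `w` shifted by the contents
of the boxes of the skew diagram `λ/μ`. -/
noncomputable def YoungDiagram.poch (w : ℂ) (μ l : YoungDiagram) : ℂ :=
  ∏ b ∈ l.cells \ μ.cells, (w + (b.2 : ℂ) - (b.1 : ℂ))

namespace YD
open YoungDiagram Finset

/-- row `i` has an addable corner. -/
def Add (μ : YoungDiagram) (i : ℕ) : Prop := i = 0 ∨ μ.rowLen i < μ.rowLen (i-1)

/-- row `i` has a removable corner. -/
def Rem (μ : YoungDiagram) (i : ℕ) : Prop := μ.rowLen (i+1) < μ.rowLen i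

instance (μ : YoungDiagram) (i : ℕ) : Decidable (Add μ i) := by unfold Add; infer_instance
instance (μ : YoungDiagram) (i : ℕ) : Decidable (Rem μ i) := by unfold Rem; infer_instance

lemma addBox_isLowerSet {μ : YoungDiagram} {i : ℕ} (h : Add μ i) :
    IsLowerSet (↑(insert (i, μ.rowLen i) μ.cells) : Set (ℕ × ℕ)) := by
  intro x y hle hx
  simp only [Finset.coe_insert, Set.mem_insert_iff, Finset.mem_coe, mem_cells] at hx ⊢
  rcases hx with rfl | hx
  · rcases eq_or_ne y (i, μ.rowLen i) with rfl | hne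
    · exact Or.inl rfl
    · right
      obtain ⟨a, b⟩ := y
      obtain ⟨ha, hb⟩ := hle
      rw [mem_iff_lt_rowLen]
      have hne' : a = i → b ≠ μ.rowLen i := by
        rintro rfl hh; exact hne (by rw [hh])
      rcases lt_or_eq_of_le (ha : a ≤ i) with ha' | rfl
      · have hi0 : i ≠ 0 := by omega
        rcases h with h | h
        · exact absurd h hi0
        · calc b ≤ μ.rowLen i := hb
            _ < μ.rowLen (i-1) := h
            _ ≤ μ.rowLen a := μ.rowLen_anti _ _ (by omega)
      · exact lt_of_le_of_ne hb (hne' rfl)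
  · exact Or.inr (μ.isLowerSet hle hx)

/-- add a box at the end of row `i` (junk value `μ` if not addable). -/
def addBox (μ : YoungDiagram) (i : ℕ) : YoungDiagram :=
  if h : Add μ i then ⟨insert (i, μ.rowLen i) μ.cells, addBox_isLowerSet h⟩ else μ

lemma delBox_isLowerSet {μ : YoungDiagram} {i : ℕ} (h : Rem μ i) :
    IsLowerSet (↑(μ.cells.erase (i, μ.rowLen i - 1)) : Set (ℕ × ℕ)) := by
  have hr : 0 < μ.rowLen i := by unfold Rem at h; omega
  intro x y hle hx
  simp only [Finset.coe_erase, Set.mem_diff, Finset.mem_coe, mem_cells, Set.mem_singleton_iff]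
    at hx ⊢
  obtain ⟨hx, hxne⟩ := hx
  refine ⟨μ.isLowerSet hle hx, ?_⟩
  rintro rfl
  obtain ⟨a, b⟩ := x
  obtain ⟨ha, hb⟩ := hle
  have hba : b < μ.rowLen a := mem_iff_lt_rowLen.mp hx
  have haa : a ≤ i := by
    by_contra hcon
    have : μ.rowLen a ≤ μ.rowLen (i+1) := μ.rowLen_anti _ _ (by omega)
    unfold Rem at h; omega
  have : μ.rowLen a ≤ μ.rowLen i := μ.rowLen_anti _ _ (by omega)
  have : a = i := by omega
  subst this
  have hb' : b = μ.rowLen a - 1 := by omega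
  exact hxne (by rw [hb'])

/-- delete the last box of row `i` (junk value `μ` if not removable). -/
def delBox (μ : YoungDiagram) (i : ℕ) : YoungDiagram :=
  if h : Rem μ i then ⟨μ.cells.erase (i, μ.rowLen i - 1), delBox_isLowerSet h⟩ else μ

lemma cells_addBox {μ : YoungDiagram} {i : ℕ} (h : Add μ i) :
    (addBox μ i).cells = insert (i, μ.rowLen i) μ.cells := by
  rw [addBox, dif_pos h]

lemma cells_delBox {μ : YoungDiagram} {i : ℕ} (h : Rem μ i) :
    (delBox μ i).cells = μ.cells.erase (i, μ.rowLen i - 1) := by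
  rw [delBox, dif_pos h]

lemma corner_not_mem (μ : YoungDiagram) (i : ℕ) : (i, μ.rowLen i) ∉ μ.cells := by
  rw [mem_cells, mem_iff_lt_rowLen]; omega

lemma corner_mem {μ : YoungDiagram} {i : ℕ} (h : Rem μ i) : (i, μ.rowLen i - 1) ∈ μ.cells := by
  have : 0 < μ.rowLen i := by unfold Rem at h; omega
  rw [mem_cells, mem_iff_lt_rowLen]; omega

lemma young_ext {μ ν : YoungDiagram} (h : μ.cells = ν.cells) : μ = ν := by
  cases μ; cases ν; simpa using h

lemma covers_addBox {μ : YoungDiagram} {i : ℕ} (h : Add μ i) : Covers μ (addBox μ i) := by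
  constructor
  · rw [← cells_subset_iff, cells_addBox h]
    exact Finset.subset_insert _ _
  · show (addBox μ i).cells.card = μ.cells.card + 1
    rw [cells_addBox h, Finset.card_insert_of_notMem (corner_not_mem μ i)]

lemma delBox_covers {μ : YoungDiagram} {i : ℕ} (h : Rem μ i) : Covers (delBox μ i) μ := by
  constructor
  · rw [← cells_subset_iff, cells_delBox h]
    exact Finset.erase_subset _ _
  · show μ.cells.card = (delBox μ i).cells.card + 1
    rw [cells_delBox h, Finset.card_erase_of_mem (corner_mem h)]
    have : 0 < μ.cells.card := Finset.card_pos.mpr ⟨_, corner_mem h⟩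
    omega

/-- basic structure of a covering pair -/
lemma card_def (μ : YoungDiagram) : μ.card = μ.cells.card := rfl

lemma covers_cells {μ ν : YoungDiagram} (h : Covers μ ν) :
    ∃ x : ℕ × ℕ, x ∉ μ.cells ∧ ν.cells = insert x μ.cells := by
  obtain ⟨hle, hcard⟩ := h
  rw [card_def, card_def] at hcard
  have hsub : μ.cells ⊆ ν.cells := cells_subset_iff.mpr hle
  have : (ν.cells \ μ.cells).card = 1 := by
    rw [Finset.card_sdiff_of_subset hsub]; omega
  obtain ⟨x, hx⟩ := Finset.card_eq_one.mp this
  have hxmem : x ∈ ν.cells \ μ.cells := hx ▸ Finset.mem_singleton_self x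
  refine ⟨x, (Finset.mem_sdiff.mp hxmem).2, ?_⟩
  refine (Finset.eq_of_subset_of_card_le ?_ ?_).symm
  · intro y hy
    rcases Finset.mem_insert.mp hy with rfl | hy
    · exact (Finset.mem_sdiff.mp hxmem).1
    · exact hsub hy
  · rw [Finset.card_insert_of_notMem (Finset.mem_sdiff.mp hxmem).2]
    omega

lemma covers_iff_addBox {μ ν : YoungDiagram} :
    Covers μ ν ↔ ∃ i, Add μ i ∧ ν = addBox μ i := by
  constructor
  · intro h
    obtain ⟨x, hxnm, hcells⟩ := covers_cells h
    obtain ⟨i, j⟩ := x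
    have hmemν : ∀ y : ℕ × ℕ, y ∈ ν ↔ y = (i,j) ∨ y ∈ μ := by
      intro y
      rw [← mem_cells, hcells, Finset.mem_insert, mem_cells]
    -- j = rowLen μ i
    have hle : μ.rowLen i ≤ j := by
      have := hxnm
      rw [mem_cells, mem_iff_lt_rowLen] at this
      omega
    have hge : j ≤ μ.rowLen i := by
      rcases Nat.eq_zero_or_pos j with rfl | hj
      · omega
      · have hmem : (i, j-1) ∈ ν := by
          have : (i, j) ∈ ν := (hmemν _).mpr (Or.inl rfl)
          exact ν.up_left_mem le_rfl (by omega) this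
        rcases (hmemν _).mp hmem with heq | hmem'
        · exfalso; have := congrArg Prod.snd heq; simp at this; omega
        · rw [mem_iff_lt_rowLen] at hmem'; omega
    have hj : j = μ.rowLen i := le_antisymm hge hle
    subst hj
    have hadd : Add μ i := by
      rcases Nat.eq_zero_or_pos i with rfl | hi
      · exact Or.inl rfl
      · right
        have hmem : (i-1, μ.rowLen i) ∈ ν := by
          have : (i, μ.rowLen i) ∈ ν := (hmemν _).mpr (Or.inl rfl)
          exact ν.up_left_mem (by omega) le_rfl this
        rcases (hmemν _).mp hmem with heq | hmem'
        · exfalso; have := congrArg Prod.fst heq; simp at this; omega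
        · rw [mem_iff_lt_rowLen] at hmem'; omega
    exact ⟨i, hadd, young_ext (by rw [hcells, cells_addBox hadd])⟩
  · rintro ⟨i, h, rfl⟩
    exact covers_addBox h

lemma covers_iff_delBox {κ μ : YoungDiagram} :
    Covers κ μ ↔ ∃ i, Rem μ i ∧ κ = delBox μ i := by
  constructor
  · intro h
    obtain ⟨x, hxnm, hcells⟩ := covers_cells h
    obtain ⟨i, j⟩ := x
    have hxμ : (i, j) ∈ μ.cells := by rw [hcells]; exact Finset.mem_insert_self _ _
    have h1 : j < μ.rowLen i := by rwa [mem_cells, mem_iff_lt_rowLen] at hxμ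
    have h2 : μ.rowLen i ≤ j + 1 := by
      by_contra hcon
      have hmem : (i, j+1) ∈ μ.cells := by rw [mem_cells, mem_iff_lt_rowLen]; omega
      rw [hcells, Finset.mem_insert] at hmem
      rcases hmem with heq | hmem
      · have := congrArg Prod.snd heq; simp at this
      · exact hxnm (κ.up_left_mem le_rfl (by omega) hmem)
    have hj : μ.rowLen i = j + 1 := by omega
    have hrem : Rem μ i := by
      show μ.rowLen (i+1) < μ.rowLen i
      have : (i+1, j) ∉ μ.cells := by
        rw [hcells, Finset.mem_insert]
        rintro (heq | hmem)
        · have := congrArg Prod.fst heq; simp at this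
        · exact hxnm (κ.up_left_mem (by omega) le_rfl hmem)
      rw [mem_cells, mem_iff_lt_rowLen] at this
      omega
    refine ⟨i, hrem, young_ext ?_⟩
    rw [cells_delBox hrem, hj, hcells]
    simp only [Nat.add_sub_cancel]
    rw [Finset.erase_insert hxnm]
  · rintro ⟨i, h, rfl⟩
    exact delBox_covers h

lemma rowLen_pos_iff {μ : YoungDiagram} {i : ℕ} : 0 < μ.rowLen i ↔ i < μ.colLen 0 := by
  rw [← mem_iff_lt_colLen, mem_iff_lt_rowLen]

lemma add_bound {μ : YoungDiagram} {i : ℕ} (h : Add μ i) : i < μ.colLen 0 + 1 := by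
  rcases h with rfl | h
  · omega
  · have : 0 < μ.rowLen (i-1) := by omega
    rw [rowLen_pos_iff] at this
    omega

lemma rem_bound {μ : YoungDiagram} {i : ℕ} (h : Rem μ i) : i < μ.colLen 0 := by
  have : 0 < μ.rowLen i := by unfold Rem at h; omega
  rwa [rowLen_pos_iff] at this

def addRows (μ : YoungDiagram) : Finset ℕ := (Finset.range (μ.colLen 0 + 1)).filter (Add μ)
def remRows (μ : YoungDiagram) : Finset ℕ := (Finset.range (μ.colLen 0)).filter (Rem μ)

lemma mem_addRows {μ : YoungDiagram} {i : ℕ} : i ∈ addRows μ ↔ Add μ i := by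
  simp only [addRows, Finset.mem_filter, Finset.mem_range]
  exact ⟨fun h => h.2, fun h => ⟨add_bound h, h⟩⟩

lemma mem_remRows {μ : YoungDiagram} {i : ℕ} : i ∈ remRows μ ↔ Rem μ i := by
  simp only [remRows, Finset.mem_filter, Finset.mem_range]
  exact ⟨fun h => h.2, fun h => ⟨rem_bound h, h⟩⟩

noncomputable instance : DecidableEq YoungDiagram := Classical.decEq _

noncomputable def above (μ : YoungDiagram) : Finset YoungDiagram := (addRows μ).image (addBox μ)
noncomputable def below (μ : YoungDiagram) : Finset YoungDiagram := (remRows μ).image (delBox μ)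

lemma addBox_injOn {μ : YoungDiagram} {i i' : ℕ} (h : Add μ i) (h' : Add μ i')
    (he : addBox μ i = addBox μ i') : i = i' := by
  by_contra hne
  have h1 : (i, μ.rowLen i) ∈ (addBox μ i).cells := by
    rw [cells_addBox h]; exact Finset.mem_insert_self _ _
  rw [he, cells_addBox h', Finset.mem_insert] at h1
  rcases h1 with heq | hmem
  · exact hne (congrArg Prod.fst heq)
  · exact corner_not_mem μ i hmem

lemma delBox_injOn {μ : YoungDiagram} {i i' : ℕ} (h : Rem μ i) (h' : Rem μ i')
    (he : delBox μ i = delBox μ i') : i = i' := by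
  by_contra hne
  have h1 : (i, μ.rowLen i - 1) ∉ (delBox μ i).cells := by
    rw [cells_delBox h]; exact Finset.notMem_erase _ _
  rw [he, cells_delBox h', Finset.mem_erase] at h1
  push_neg at h1
  have := h1 (by intro heq; exact hne (congrArg Prod.fst heq))
  exact this (corner_mem h) |>.elim

lemma mem_above {μ ν : YoungDiagram} : ν ∈ above μ ↔ Covers μ ν := by
  simp only [above, Finset.mem_image]
  rw [covers_iff_addBox]
  constructor
  · rintro ⟨i, hi, rfl⟩; exact ⟨i, mem_addRows.mp hi, rfl⟩
  · rintro ⟨i, hi, rfl⟩; exact ⟨i, mem_addRows.mpr hi, rfl⟩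

lemma mem_below {κ μ : YoungDiagram} : κ ∈ below μ ↔ Covers κ μ := by
  simp only [below, Finset.mem_image]
  rw [covers_iff_delBox]
  constructor
  · rintro ⟨i, hi, rfl⟩; exact ⟨i, mem_remRows.mp hi, rfl⟩
  · rintro ⟨i, hi, rfl⟩; exact ⟨i, mem_remRows.mpr hi, rfl⟩

lemma sum_above {M : Type*} [AddCommMonoid M] (μ : YoungDiagram) (f : YoungDiagram → M) :
    ∑ ν ∈ above μ, f ν = ∑ i ∈ addRows μ, f (addBox μ i) :=
  (Finset.sum_image (fun i hi i' hi' h =>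
    addBox_injOn (mem_addRows.mp hi) (mem_addRows.mp hi') h))

lemma sum_below {M : Type*} [AddCommMonoid M] (μ : YoungDiagram) (f : YoungDiagram → M) :
    ∑ κ ∈ below μ, f κ = ∑ i ∈ remRows μ, f (delBox μ i) :=
  (Finset.sum_image (fun i hi i' hi' h =>
    delBox_injOn (mem_remRows.mp hi) (mem_remRows.mp hi') h))

lemma poch_addBox {μ : YoungDiagram} {i : ℕ} (h : Add μ i) (w : ℂ) :
    poch w μ (addBox μ i) = w + (μ.rowLen i : ℂ) - (i : ℂ) := by
  unfold YoungDiagram.poch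
  rw [cells_addBox h, Finset.insert_sdiff_of_notMem _ (by exact fun hh => corner_not_mem μ i hh),
    Finset.sdiff_self]
  simp

lemma poch_delBox {μ : YoungDiagram} {i : ℕ} (h : Rem μ i) (w : ℂ) :
    poch w (delBox μ i) μ = w + ((μ.rowLen i : ℂ) - 1) - (i : ℂ) := by
  have hr : 0 < μ.rowLen i := by unfold Rem at h; omega
  unfold YoungDiagram.poch
  rw [cells_delBox h, Finset.sdiff_erase_self (corner_mem h)]
  · rw [Finset.prod_singleton]
    push_cast [Nat.cast_sub hr]
    ring

/-! ### The corner identity -/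

private lemma seqCorner : ∀ (N : ℕ) (r : ℕ → ℕ), Antitone r → (∀ i, N ≤ i → r i = 0) →
    ∀ z z' : ℂ,
    (∑ i ∈ Finset.range (N+1),
        if (i = 0 ∨ r i < r (i-1)) then (z + (r i : ℂ) - i) * (z' + (r i : ℂ) - i) else 0)
    = (∑ i ∈ Finset.range (N+1),
        if r (i+1) < r i then (z + ((r i : ℂ) - 1) - i) * (z' + ((r i : ℂ) - 1) - i) else 0)
      + (z*z' + 2 * ∑ i ∈ Finset.range N, (r i : ℂ)) := by
  intro N
  induction N with
  | zero =>
    intro r hanti hvan z z'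
    have h0 : ∀ i, r i = 0 := fun i => hvan i (Nat.zero_le i)
    simp [h0]
  | succ N IH =>
    intro r hanti hvan z z'
    have hr' : Antitone (fun i => r (i+1)) := fun a b hab => hanti (by omega)
    have hv' : ∀ i, N ≤ i → r (i+1) = 0 := fun i hi => hvan (i+1) (by omega)
    have key := IH (fun i => r (i+1)) hr' hv' (z-1) (z'-1)
    rw [Finset.sum_range_succ' _ (N+1), Finset.sum_range_succ' _ (N+1)]
    -- identify shifted sums
    have hA : (∑ i ∈ Finset.range (N+1),
        if (i + 1 = 0 ∨ r (i+1) < r (i+1-1)) then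
          (z + (r (i+1) : ℂ) - ((i+1 : ℕ) : ℂ)) * (z' + (r (i+1) : ℂ) - ((i+1 : ℕ) : ℂ)) else 0)
      = (∑ i ∈ Finset.range (N+1),
        if (i = 0 ∨ r (i+1) < r (i-1+1)) then
          ((z-1) + (r (i+1) : ℂ) - i) * ((z'-1) + (r (i+1) : ℂ) - i) else 0)
        - (if ¬ (r 1 < r 0) then ((z-1) + (r 1 : ℂ) - 0) * ((z'-1) + (r 1 : ℂ) - 0) else 0) := by
      rw [eq_sub_iff_add_eq, Finset.sum_range_succ' _ N, Finset.sum_range_succ' (fun i =>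
        if (i = 0 ∨ r (i+1) < r (i-1+1)) then
          ((z-1) + (r (i+1) : ℂ) - i) * ((z'-1) + (r (i+1) : ℂ) - i) else 0) N]
      have hAB : (∑ i ∈ Finset.range N,
          if (i + 1 + 1 = 0 ∨ r (i+1+1) < r (i+1+1-1)) then
            (z + (r (i+1+1) : ℂ) - ((i+1+1 : ℕ) : ℂ)) * (z' + (r (i+1+1) : ℂ) - ((i+1+1 : ℕ) : ℂ)) else 0)
        = (∑ i ∈ Finset.range N,
          if (i + 1 = 0 ∨ r (i+1+1) < r (i+1-1+1)) then
            ((z-1) + (r (i+1+1) : ℂ) - ((i+1 : ℕ) : ℂ)) * ((z'-1) + (r (i+1+1) : ℂ) - ((i+1 : ℕ) : ℂ)) else 0) := by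
        apply Finset.sum_congr rfl
        intro i _
        have hcond : (i + 1 + 1 = 0 ∨ r (i+1+1) < r (i+1+1-1)) ↔
            (i + 1 = 0 ∨ r (i+1+1) < r (i+1-1+1)) := by
          simp only [Nat.add_sub_cancel]
          omega
        rw [if_congr hcond rfl rfl]
        apply if_congr Iff.rfl _ rfl
        push_cast; ring_nf
      rw [hAB, add_assoc]
      congr 1
      by_cases h01 : r 1 < r 0
      · rw [if_pos (by simpa using h01 : (0+1=0 ∨ r (0+1) < r (0+1-1))), if_neg (by omega),
          if_pos (Or.inl rfl)]
        push_cast; ring_nf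
      · rw [if_neg (by simpa using h01), if_pos (by omega), if_pos (Or.inl rfl)]
        simp
    have hR : (∑ i ∈ Finset.range (N+1),
        if r (i+1+1) < r (i+1) then
          (z + ((r (i+1) : ℂ) - 1) - ((i+1 : ℕ) : ℂ)) * (z' + ((r (i+1) : ℂ) - 1) - ((i+1 : ℕ) : ℂ)) else 0)
      = (∑ i ∈ Finset.range (N+1),
        if r (i+1+1) < r (i+1) then
          ((z-1) + ((r (i+1) : ℂ) - 1) - i) * ((z'-1) + ((r (i+1) : ℂ) - 1) - i) else 0) := by
      apply Finset.sum_congr rfl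
      intro i _
      apply if_congr Iff.rfl _ rfl
      push_cast; ring_nf
    rw [hA, hR, key]
    have hsum : (∑ i ∈ Finset.range (N+1), (r i : ℂ))
        = (∑ i ∈ Finset.range N, (r (i+1) : ℂ)) + (r 0 : ℂ) := Finset.sum_range_succ' _ N
    rw [hsum]
    rw [if_pos (Or.inl rfl)]
    have h10 : r 1 ≤ r 0 := hanti (by omega)
    by_cases h01 : r 1 < r 0
    · rw [if_neg (by omega), if_pos h01]
      simp only [Nat.cast_zero, sub_zero, add_zero]
      ring
    · have : r 1 = r 0 := by omega
      rw [if_pos (by omega), if_neg h01, this]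
      simp only [Nat.cast_zero, sub_zero, add_zero]
      ring

lemma rowLen_zero_of_le {μ : YoungDiagram} {i : ℕ} (h : μ.colLen 0 ≤ i) : μ.rowLen i = 0 := by
  by_contra hc
  have : 0 < μ.rowLen i := Nat.pos_of_ne_zero hc
  rw [rowLen_pos_iff] at this
  omega

lemma card_eq_sum_rowLen (μ : YoungDiagram) :
    μ.card = ∑ i ∈ Finset.range (μ.colLen 0), μ.rowLen i := by
  rw [card_def]
  have hcells : μ.cells = (Finset.range (μ.colLen 0)).biUnion (fun i => μ.row i) := by
    ext ⟨a, b⟩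
    simp only [Finset.mem_biUnion, Finset.mem_range, mem_row_iff]
    constructor
    · intro h
      have hb : (a, b) ∈ μ := h
      have : a < μ.colLen b := mem_iff_lt_colLen.mp hb
      have : a < μ.colLen 0 := lt_of_lt_of_le this (μ.colLen_anti 0 b (Nat.zero_le b))
      exact ⟨a, this, hb, rfl⟩
    · rintro ⟨i, _, h, rfl⟩
      exact h
  rw [hcells, Finset.card_biUnion]
  · exact Finset.sum_congr rfl fun i _ => (μ.rowLen_eq_card).symm
  · intro x _ y _ hxy
    simp only [Finset.disjoint_left]
    intro c hc hc'
    rw [mem_row_iff] at hc hc'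
    exact hxy (hc.2 ▸ hc'.2.symm ▸ rfl)

lemma corner_identity (μ : YoungDiagram) (z z' : ℂ) :
    ∑ ν ∈ above μ, poch z μ ν * poch z' μ ν
    = (∑ κ ∈ below μ, poch z κ μ * poch z' κ μ) + (z*z' + 2*(μ.card : ℂ)) := by
  set N := μ.colLen 0 with hN
  have hanti : Antitone μ.rowLen := fun a b hab => μ.rowLen_anti a b hab
  have hvan : ∀ i, N ≤ i → μ.rowLen i = 0 := fun i hi => rowLen_zero_of_le hi
  have hseq := seqCorner N μ.rowLen hanti hvan z z'
  have hAbove : ∑ ν ∈ above μ, poch z μ ν * poch z' μ ν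
      = ∑ i ∈ Finset.range (N+1),
          if (i = 0 ∨ μ.rowLen i < μ.rowLen (i-1)) then
            (z + (μ.rowLen i : ℂ) - i) * (z' + (μ.rowLen i : ℂ) - i) else 0 := by
    rw [sum_above, addRows, Finset.sum_filter]
    apply Finset.sum_congr rfl
    intro i _
    by_cases h : Add μ i
    · rw [if_pos h, if_pos (show i = 0 ∨ μ.rowLen i < μ.rowLen (i-1) from h),
        poch_addBox h z, poch_addBox h z']
    · rw [if_neg h, if_neg (show ¬(i = 0 ∨ μ.rowLen i < μ.rowLen (i-1)) from h)]
  have hBelow : ∑ κ ∈ below μ, poch z κ μ * poch z' κ μ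
      = ∑ i ∈ Finset.range (N+1),
          if μ.rowLen (i+1) < μ.rowLen i then
            (z + ((μ.rowLen i : ℂ) - 1) - i) * (z' + ((μ.rowLen i : ℂ) - 1) - i) else 0 := by
    rw [sum_below, remRows, Finset.sum_filter, Finset.sum_range_succ]
    rw [if_neg (by show ¬ (μ.rowLen (N+1) < μ.rowLen N); rw [rowLen_zero_of_le (le_refl N)]; omega)]
    rw [add_zero]
    apply Finset.sum_congr rfl
    intro i _
    by_cases h : Rem μ i
    · rw [if_pos h, if_pos (show μ.rowLen (i+1) < μ.rowLen i from h),
        poch_delBox h z, poch_delBox h z']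
    · rw [if_neg h, if_neg (show ¬(μ.rowLen (i+1) < μ.rowLen i) from h)]
  rw [hAbove, hBelow, hseq, card_eq_sum_rowLen μ]
  push_cast
  ring

/-! ### Chains -/

def Chains (μ l : YoungDiagram) (k : ℕ) : Type :=
  {f : Fin (k+1) → YoungDiagram //
    f 0 = μ ∧ f (Fin.last _) = l ∧ ∀ i : Fin k, Covers (f i.castSucc) (f i.succ)}

lemma skewDim_eq (μ l : YoungDiagram) :
    skewDim μ l = Nat.card (Chains μ l (l.card - μ.card)) := rfl

instance finite_le (l : YoungDiagram) : Finite {κ : YoungDiagram // κ ≤ l} := by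
  apply Finite.of_injective (fun κ : {κ : YoungDiagram // κ ≤ l} =>
    (⟨κ.1.cells, Finset.mem_powerset.mpr (cells_subset_iff.mpr κ.2)⟩ : ↥l.cells.powerset))
  intro a b h
  exact Subtype.ext (young_ext (congrArg Subtype.val h))

lemma chain_le {μ l : YoungDiagram} {k : ℕ} (f : Chains μ l k) (i : Fin (k+1)) : f.1 i ≤ l := by
  have hmono : Monotone f.1 := Fin.monotone_iff_le_succ.mpr (fun i => (f.2.2.2 i).1)
  have := hmono (Fin.le_last i)
  rwa [f.2.2.1] at this

instance finiteChains (μ l : YoungDiagram) (k : ℕ) : Finite (Chains μ l k) := by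
  apply Finite.of_injective (fun f : Chains μ l k =>
    (fun i => (⟨f.1 i, chain_le f i⟩ : {κ : YoungDiagram // κ ≤ l}) : Fin (k+1) → _))
  intro a b h
  apply Subtype.ext; funext i
  exact congrArg Subtype.val (congrFun h i)

lemma skewDim_self (μ : YoungDiagram) : skewDim μ μ = 1 := by
  rw [skewDim_eq, Nat.sub_self]
  haveI : Nonempty (Chains μ μ 0) := ⟨⟨fun _ => μ, rfl, rfl, fun i => i.elim0⟩⟩
  haveI : Subsingleton (Chains μ μ 0) := ⟨by
    rintro ⟨f, hf, -, -⟩ ⟨g, hg, -, -⟩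
    apply Subtype.ext; funext i
    have hi : i = 0 := Fin.fin_one_eq_zero i
    show f i = g i
    rw [hi, hf, hg]⟩
  exact Nat.card_unique

lemma skewDim_of_card_le {μ l : YoungDiagram} (h : l.card ≤ μ.card) :
    skewDim μ l = if μ = l then 1 else 0 := by
  split_ifs with he
  · rw [he, skewDim_self]
  · rw [skewDim_eq, Nat.sub_eq_zero_of_le h]
    haveI : IsEmpty (Chains μ l 0) := ⟨by
      rintro ⟨f, hf0, hfl, -⟩
      exact he (by rw [← hf0, ← hfl]; rfl)⟩
    exact Nat.card_of_isEmpty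

def lastEquiv (μ l : YoungDiagram) (t : ℕ) :
    Chains μ l (t+1) ≃ Σ κ : ↥(below l), Chains μ (κ : YoungDiagram) t where
  toFun f := ⟨⟨f.1 ((Fin.last t).castSucc), mem_below.mpr (by
      have h := f.2.2.2 (Fin.last t)
      rwa [show (Fin.last t).succ = Fin.last (t+1) from rfl, f.2.2.1] at h)⟩,
    ⟨fun i => f.1 i.castSucc, by simpa using f.2.1, rfl, fun i => by
      show (f.1 i.castSucc.castSucc).Covers (f.1 i.succ.castSucc)
      have h := f.2.2.2 i.castSucc
      rwa [Fin.succ_castSucc] at h⟩⟩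
  invFun p := ⟨Fin.snoc p.2.1 l, by
      rw [show (0 : Fin (t+2)) = (0 : Fin (t+1)).castSucc by rw [Fin.castSucc_zero],
        Fin.snoc_castSucc]; exact p.2.2.1,
      Fin.snoc_last _ _, fun i => by
      refine Fin.lastCases ?_ (fun j => ?_) i
      · rw [Fin.snoc_castSucc, show (Fin.last t).succ = Fin.last (t+1) from rfl, Fin.snoc_last,
          p.2.2.2.1]
        exact mem_below.mp p.1.2
      · rw [Fin.snoc_castSucc, Fin.succ_castSucc, Fin.snoc_castSucc]
        exact p.2.2.2.2 j⟩
  left_inv f := by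
    apply Subtype.ext; funext i
    show (Fin.snoc (fun j => f.1 j.castSucc) l : Fin (t+2) → YoungDiagram) i = f.1 i
    refine Fin.lastCases ?_ (fun j => ?_) i
    · rw [Fin.snoc_last, f.2.2.1]
    · rw [Fin.snoc_castSucc]
  right_inv p := by
    obtain ⟨⟨κ, hκ⟩, g⟩ := p
    have h1 : (Fin.snoc g.1 l : Fin (t+2) → YoungDiagram) ((Fin.last t).castSucc) = κ := by
      rw [Fin.snoc_castSucc]; exact g.2.2.1
    refine Sigma.ext (Subtype.ext h1) ((Subtype.heq_iff_coe_eq ?_).mpr ?_)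
    · intro x
      show (x 0 = μ ∧ x (Fin.last t) = (Fin.snoc g.1 l : Fin (t+2) → YoungDiagram)
            ((Fin.last t).castSucc) ∧ ∀ i : Fin t, Covers (x i.castSucc) (x i.succ))
          ↔ (x 0 = μ ∧ x (Fin.last t) = κ ∧ ∀ i : Fin t, Covers (x i.castSucc) (x i.succ))
      rw [h1]
    · funext i
      show (Fin.snoc g.1 l : Fin (t+2) → YoungDiagram) i.castSucc = g.1 i
      rw [Fin.snoc_castSucc]

def firstEquiv (μ l : YoungDiagram) (t : ℕ) :
    Chains μ l (t+1) ≃ Σ ν : ↥(above μ), Chains (ν : YoungDiagram) l t where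
  toFun f := ⟨⟨f.1 ((0 : Fin (t+1)).succ), mem_above.mpr (by
      have h := f.2.2.2 (0 : Fin (t+1))
      rwa [Fin.castSucc_zero, f.2.1] at h)⟩,
    ⟨fun i => f.1 i.succ, rfl, by
      show f.1 (Fin.last t).succ = l
      rw [show (Fin.last t).succ = Fin.last (t+1) from rfl]; exact f.2.2.1, fun i => by
      show (f.1 i.castSucc.succ).Covers (f.1 i.succ.succ)
      have h := f.2.2.2 i.succ
      rwa [← Fin.succ_castSucc] at h⟩⟩
  invFun p := ⟨Fin.cons μ p.2.1, Fin.cons_zero _ _, by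
      show (Fin.cons μ p.2.1 : Fin (t+2) → YoungDiagram) (Fin.last (t+1)) = l
      rw [show Fin.last (t+1) = (Fin.last t).succ from rfl, Fin.cons_succ]
      exact p.2.2.2.1, fun i => by
      refine Fin.cases ?_ (fun j => ?_) i
      · show ((Fin.cons μ p.2.1 : Fin (t+2) → YoungDiagram) ((0 : Fin (t+1)).castSucc)).Covers
          ((Fin.cons μ p.2.1 : Fin (t+2) → YoungDiagram) ((0 : Fin (t+1)).succ))
        rw [show ((0 : Fin (t+1)).castSucc) = (0 : Fin (t+2)) by simp, Fin.cons_zero,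
          Fin.cons_succ]
        have h2 := p.1.2
        rw [mem_above] at h2
        rw [p.2.2.1]; exact h2
      · show ((Fin.cons μ p.2.1 : Fin (t+2) → YoungDiagram) j.succ.castSucc).Covers
          ((Fin.cons μ p.2.1 : Fin (t+2) → YoungDiagram) j.succ.succ)
        rw [← Fin.succ_castSucc, Fin.cons_succ, Fin.cons_succ]
        exact p.2.2.2.2 j⟩
  left_inv f := by
    apply Subtype.ext; funext i
    show (Fin.cons μ (fun j => f.1 j.succ) : Fin (t+2) → YoungDiagram) i = f.1 i
    refine Fin.cases ?_ (fun j => ?_) i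
    · rw [Fin.cons_zero, f.2.1]
    · rw [Fin.cons_succ]
  right_inv p := by
    obtain ⟨⟨ν, hν⟩, g⟩ := p
    have h1 : (Fin.cons μ g.1 : Fin (t+2) → YoungDiagram) ((0 : Fin (t+1)).succ) = ν := by
      rw [Fin.cons_succ]; exact g.2.1
    refine Sigma.ext (Subtype.ext h1) ((Subtype.heq_iff_coe_eq ?_).mpr ?_)
    · intro x
      show (x 0 = (Fin.cons μ g.1 : Fin (t+2) → YoungDiagram) ((0 : Fin (t+1)).succ)
            ∧ x (Fin.last t) = l ∧ ∀ i : Fin t, Covers (x i.castSucc) (x i.succ))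
          ↔ (x 0 = ν ∧ x (Fin.last t) = l ∧ ∀ i : Fin t, Covers (x i.castSucc) (x i.succ))
      rw [h1]
    · funext i
      show (Fin.cons μ g.1 : Fin (t+2) → YoungDiagram) i.succ = g.1 i
      rw [Fin.cons_succ]

lemma skewDim_rec_last {μ l : YoungDiagram} (h : μ.card < l.card) :
    skewDim μ l = ∑ κ ∈ below l, skewDim μ κ := by
  obtain ⟨t, ht⟩ : ∃ t, l.card - μ.card = t + 1 := ⟨l.card - μ.card - 1, by omega⟩
  rw [skewDim_eq, ht, Nat.card_congr (lastEquiv μ l t)]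
  haveI : ∀ κ : ↥(below l), Fintype (Chains μ (κ : YoungDiagram) t) :=
    fun κ => Fintype.ofFinite _
  rw [Nat.card_eq_fintype_card, Fintype.card_sigma]
  rw [← Finset.sum_coe_sort (below l) (fun κ => skewDim μ κ)]
  apply Finset.sum_congr rfl
  intro κ _
  have hcard : (κ : YoungDiagram).card - μ.card = t := by
    have hc := (mem_below.mp κ.2).2
    omega
  rw [skewDim_eq, hcard, Nat.card_eq_fintype_card]

lemma skewDim_rec_first {μ l : YoungDiagram} (h : μ.card < l.card) :
    skewDim μ l = ∑ ν ∈ above μ, skewDim ν l := by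
  obtain ⟨t, ht⟩ : ∃ t, l.card - μ.card = t + 1 := ⟨l.card - μ.card - 1, by omega⟩
  rw [skewDim_eq, ht, Nat.card_congr (firstEquiv μ l t)]
  haveI : ∀ ν : ↥(above μ), Fintype (Chains (ν : YoungDiagram) l t) :=
    fun ν => Fintype.ofFinite _
  rw [Nat.card_eq_fintype_card, Fintype.card_sigma]
  rw [← Finset.sum_coe_sort (above μ) (fun ν => skewDim ν l)]
  apply Finset.sum_congr rfl
  intro ν _
  have hcard : l.card - (ν : YoungDiagram).card = t := by
    have hc := (mem_above.mp ν.2).2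
    omega
  rw [skewDim_eq, hcard, Nat.card_eq_fintype_card]

lemma card_eq_zero_iff_bot (μ : YoungDiagram) : μ.card = 0 ↔ μ = ⊥ := by
  rw [card_def, Finset.card_eq_zero]
  constructor
  · intro h; apply young_ext; rw [h, cells_bot]
  · intro h; rw [h, cells_bot]

lemma below_nonempty {l : YoungDiagram} (h : l ≠ ⊥) : (below l).Nonempty := by
  have hc : 0 < l.colLen 0 := by
    by_contra hc
    have h0 : l.colLen 0 = 0 := by omega
    apply h; apply young_ext
    rw [cells_bot]
    ext ⟨a, b⟩
    simp only [mem_cells, Finset.notMem_empty, iff_false]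
    intro hm
    have := mem_iff_lt_colLen.mp hm
    have := l.colLen_anti 0 b (Nat.zero_le b)
    omega
  refine ⟨delBox l (l.colLen 0 - 1), mem_below.mpr (delBox_covers ?_)⟩
  show l.rowLen (l.colLen 0 - 1 + 1) < l.rowLen (l.colLen 0 - 1)
  have h1 : l.rowLen (l.colLen 0 - 1 + 1) = 0 := rowLen_zero_of_le (by omega)
  have h2 : 0 < l.rowLen (l.colLen 0 - 1) := rowLen_pos_iff.mpr (by omega)
  omega

lemma dim_pos (l : YoungDiagram) : 0 < l.dim := by
  have hbot : (⊥ : YoungDiagram).card = 0 := by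
    rw [card_eq_zero_iff_bot]
  suffices H : ∀ (n : ℕ) (l : YoungDiagram), l.card = n → 0 < l.dim from H l.card l rfl
  intro n
  induction n with
  | zero =>
    intro l hn
    have : l = ⊥ := (card_eq_zero_iff_bot l).mp hn
    rw [this]
    show 0 < skewDim ⊥ ⊥
    rw [skewDim_self]; omega
  | succ n IH =>
    intro l hn
    show 0 < skewDim ⊥ l
    rw [skewDim_rec_last (by omega)]
    have hne : l ≠ ⊥ := by
      intro hb; rw [hb] at hn; omega
    obtain ⟨κ, hκ⟩ := below_nonempty hne
    have hκc : κ.card = n := by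
      have := (mem_below.mp hκ).2; omega
    calc 0 < skewDim ⊥ κ := IH κ hκc
    _ ≤ ∑ κ' ∈ below l, skewDim ⊥ κ' :=
        Finset.single_le_sum (fun i _ => Nat.zero_le _) hκ

/-! ### Diamond lemmas -/

lemma card_inf_add_card_sup (μ τ : YoungDiagram) :
    (μ ⊓ τ).card + (μ ⊔ τ).card = μ.card + τ.card := by
  rw [card_def, card_def, card_def, card_def, cells_inf, cells_sup]
  exact Finset.card_inter_add_card_union _ _

lemma young_le_of_card {μ ν : YoungDiagram} (hle : μ ≤ ν) (hc : ν.card ≤ μ.card) : μ = ν := by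
  apply young_ext
  exact Finset.eq_of_subset_of_card_le (cells_subset_iff.mpr hle) hc

lemma diamond_up {μ μ' τ : YoungDiagram} (hμ : Covers μ μ') (hτ : Covers τ μ') (hne : τ ≠ μ) :
    Covers (μ ⊓ τ) μ ∧ Covers (μ ⊓ τ) τ ∧ μ ⊔ τ = μ' := by
  obtain ⟨hμle, hμc⟩ := hμ
  obtain ⟨hτle, hτc⟩ := hτ
  have hcc : τ.card = μ.card := by omega
  have hsup_le : μ ⊔ τ ≤ μ' := sup_le hμle hτle
  have hinf_ne : μ ⊓ τ ≠ μ := by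
    intro he
    have : μ ≤ τ := he ▸ inf_le_right
    exact hne (young_le_of_card this (by omega)).symm
  have hinf_lt : (μ ⊓ τ).card < μ.card := by
    have hle : (μ ⊓ τ).card ≤ μ.card := by
      rw [card_def, card_def]
      exact Finset.card_le_card (cells_subset_iff.mpr inf_le_left)
    rcases lt_or_eq_of_le hle with h | h
    · exact h
    · exact absurd (young_le_of_card inf_le_left (le_of_eq h.symm)) hinf_ne
  have hsup_le_card : (μ ⊔ τ).card ≤ μ'.card := by
    rw [card_def, card_def]
    exact Finset.card_le_card (cells_subset_iff.mpr hsup_le)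
  have hkey := card_inf_add_card_sup μ τ
  have hinf_card : (μ ⊓ τ).card = μ.card - 1 := by omega
  have hsup_card : (μ ⊔ τ).card = μ.card + 1 := by omega
  have hsup_eq : μ ⊔ τ = μ' := young_le_of_card hsup_le (by omega)
  have hμpos : 0 < μ.card := by omega
  exact ⟨⟨inf_le_left, by omega⟩, ⟨inf_le_right, by omega⟩, hsup_eq⟩

lemma diamond_down {μ κ τ : YoungDiagram} (hμ : Covers κ μ) (hτ : Covers κ τ) (hne : τ ≠ μ) :
    Covers μ (μ ⊔ τ) ∧ Covers τ (μ ⊔ τ) ∧ μ ⊓ τ = κ := by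
  obtain ⟨hμle, hμc⟩ := hμ
  obtain ⟨hτle, hτc⟩ := hτ
  have hcc : τ.card = μ.card := by omega
  have hinf_ge : κ ≤ μ ⊓ τ := le_inf hμle hτle
  have hinf_ne : μ ⊓ τ ≠ μ := by
    intro he
    have : μ ≤ τ := he ▸ inf_le_right
    exact hne (young_le_of_card this (by omega)).symm
  have hinf_le_card : (μ ⊓ τ).card ≤ μ.card := by
    rw [card_def, card_def]
    exact Finset.card_le_card (cells_subset_iff.mpr inf_le_left)
  have hinf_lt : (μ ⊓ τ).card < μ.card := by
    rcases lt_or_eq_of_le hinf_le_card with h | h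
    · exact h
    · exact absurd (young_le_of_card inf_le_left (le_of_eq h.symm)) hinf_ne
  have hinf_ge_card : κ.card ≤ (μ ⊓ τ).card := by
    rw [card_def, card_def]
    exact Finset.card_le_card (cells_subset_iff.mpr hinf_ge)
  have hinf_eq : μ ⊓ τ = κ := (young_le_of_card hinf_ge (by omega)).symm
  have hkey := card_inf_add_card_sup μ τ
  have hsup_card : (μ ⊔ τ).card = μ.card + 1 := by omega
  exact ⟨⟨le_sup_left, by omega⟩, ⟨le_sup_right, by omega⟩, hinf_eq⟩

lemma sdiff_cells_eq {μ τ : YoungDiagram} :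
    (μ ⊔ τ).cells \ τ.cells = μ.cells \ (μ ⊓ τ).cells := by
  rw [cells_sup, cells_inf]
  ext x
  simp only [Finset.mem_sdiff, Finset.mem_union, Finset.mem_inter]
  tauto

lemma poch_diamond (w : ℂ) {μ τ : YoungDiagram} :
    poch w τ (μ ⊔ τ) = poch w (μ ⊓ τ) μ := by
  unfold YoungDiagram.poch
  rw [sdiff_cells_eq]

/-- The cross-terms bijection. -/
lemma pair_sum (μ : YoungDiagram) (G : YoungDiagram → YoungDiagram → YoungDiagram → ℂ)
    (hG : ∀ μ' τ, Covers μ μ' → Covers τ μ' → τ ≠ μ → G (μ ⊓ τ) μ τ = G τ μ' τ) :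
    ∑ μ' ∈ above μ, ∑ τ ∈ (below μ').erase μ, G τ μ' τ
    = ∑ κ ∈ below μ, ∑ τ ∈ (above κ).erase μ, G κ μ τ := by
  rw [Finset.sum_sigma', Finset.sum_sigma']
  apply Finset.sum_nbij' (fun p => (⟨μ ⊓ p.2, p.2⟩ : Σ _ : YoungDiagram, YoungDiagram))
    (fun p => (⟨μ ⊔ p.2, p.2⟩ : Σ _ : YoungDiagram, YoungDiagram))
  · rintro ⟨μ', τ⟩ hp
    simp only [Finset.mem_sigma, Finset.mem_erase] at hp ⊢
    obtain ⟨h1, hne, h2⟩ := hp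
    obtain ⟨d1, d2, d3⟩ := diamond_up (mem_above.mp h1) (mem_below.mp h2) hne
    refine ⟨mem_below.mpr d1, ?_, mem_above.mpr d2⟩
    intro he
    exact (absurd (he ▸ rfl : τ = μ) hne)
  · rintro ⟨κ, τ⟩ hp
    simp only [Finset.mem_sigma, Finset.mem_erase] at hp ⊢
    obtain ⟨h1, hne, h2⟩ := hp
    obtain ⟨d1, d2, d3⟩ := diamond_down (mem_below.mp h1) (mem_above.mp h2) hne
    refine ⟨mem_above.mpr d1, ?_, mem_below.mpr d2⟩
    intro he
    exact (absurd (he ▸ rfl : τ = μ) hne)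
  · rintro ⟨μ', τ⟩ hp
    simp only [Finset.mem_sigma, Finset.mem_erase] at hp
    obtain ⟨h1, hne, h2⟩ := hp
    obtain ⟨-, -, d3⟩ := diamond_up (mem_above.mp h1) (mem_below.mp h2) hne
    rw [d3]
  · rintro ⟨κ, τ⟩ hp
    simp only [Finset.mem_sigma, Finset.mem_erase] at hp
    obtain ⟨h1, hne, h2⟩ := hp
    obtain ⟨-, -, d3⟩ := diamond_down (mem_below.mp h1) (mem_above.mp h2) hne
    rw [d3]
  · rintro ⟨μ', τ⟩ hp
    simp only [Finset.mem_sigma, Finset.mem_erase] at hp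
    obtain ⟨h1, hne, h2⟩ := hp
    exact (hG μ' τ (mem_above.mp h1) (mem_below.mp h2) hne).symm

/-! ### The master identity -/

lemma master_base (z z' : ℂ) {μ l : YoungDiagram} (h : l.card < μ.card) :
    ∑ ν ∈ above l, poch z l ν * poch z' l ν * (skewDim μ ν : ℂ)
    = (((l.card:ℂ)+1)*(z*z' + (l.card:ℂ)) - (μ.card:ℂ)*((μ.card:ℂ) - 1 + z*z'))
        * (skewDim μ l : ℂ)
      + ∑ κ ∈ below μ, poch z κ μ * poch z' κ μ * (skewDim κ l : ℂ) := by
  have hμl : skewDim μ l = 0 := by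
    rw [skewDim_of_card_le (by omega), if_neg (by intro he; rw [he] at h; omega)]
  have hLHS : ∑ ν ∈ above l, poch z l ν * poch z' l ν * (skewDim μ ν : ℂ)
      = ∑ ν ∈ above l, if μ = ν then poch z l ν * poch z' l ν else 0 := by
    apply Finset.sum_congr rfl
    intro ν hν
    have hc := (mem_above.mp hν).2
    rw [skewDim_of_card_le (by omega)]
    split_ifs <;> simp
  have hRHS : ∑ κ ∈ below μ, poch z κ μ * poch z' κ μ * (skewDim κ l : ℂ)
      = ∑ κ ∈ below μ, if l = κ then poch z κ μ * poch z' κ μ else 0 := by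
    apply Finset.sum_congr rfl
    intro κ hκ
    have hc := (mem_below.mp hκ).2
    rw [skewDim_of_card_le (by omega)]
    split_ifs with h1 h2 h2
    · simp
    · exact absurd h1.symm h2
    · exact absurd h2.symm h1
    · simp
  rw [hLHS, hRHS, Finset.sum_ite_eq, Finset.sum_ite_eq, hμl]
  have hiff : (μ ∈ above l) ↔ (l ∈ below μ) := by
    rw [mem_above, mem_below]
  push_cast
  rw [mul_zero, zero_add]
  by_cases hc : μ ∈ above l
  · rw [if_pos hc, if_pos (hiff.mp hc)]
  · rw [if_neg hc, if_neg (fun hc' => hc (hiff.mpr hc'))]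

set_option maxHeartbeats 2000000 in
lemma master_aux (z z' : ℂ) : ∀ (k : ℕ) (μ l : YoungDiagram), l.card + 1 - μ.card ≤ k →
    ∑ ν ∈ above l, poch z l ν * poch z' l ν * (skewDim μ ν : ℂ)
    = (((l.card:ℂ)+1)*(z*z' + (l.card:ℂ)) - (μ.card:ℂ)*((μ.card:ℂ) - 1 + z*z'))
        * (skewDim μ l : ℂ)
      + ∑ κ ∈ below μ, poch z κ μ * poch z' κ μ * (skewDim κ l : ℂ) := by
  intro k
  induction k with
  | zero =>
    intro μ l hk
    exact master_base z z' (by omega)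
  | succ k IH =>
    intro μ l hk
    by_cases hml : l.card < μ.card
    · exact master_base z z' hml
    push_neg at hml   -- μ.card ≤ l.card
    set n := l.card with hn
    set m := μ.card with hm
    -- Step 1: expand skewDim μ ν by first-step recursion
    have h1 : ∑ ν ∈ above l, poch z l ν * poch z' l ν * (skewDim μ ν : ℂ)
        = ∑ μ' ∈ above μ, ∑ ν ∈ above l, poch z l ν * poch z' l ν * (skewDim μ' ν : ℂ) := by
      rw [Finset.sum_comm]
      apply Finset.sum_congr rfl
      intro ν hν
      have hc := (mem_above.mp hν).2
      have : skewDim μ ν = ∑ μ' ∈ above μ, skewDim μ' ν :=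
        skewDim_rec_first (by omega)
      rw [← Finset.mul_sum, this]
      push_cast
      ring
    -- Step 2: apply IH to each μ'
    have h2 : ∀ μ' ∈ above μ,
        ∑ ν ∈ above l, poch z l ν * poch z' l ν * (skewDim μ' ν : ℂ)
        = (((n:ℂ)+1)*(z*z' + (n:ℂ)) - ((m:ℂ)+1)*(((m:ℂ)+1) - 1 + z*z'))
            * (skewDim μ' l : ℂ)
          + ∑ κ ∈ below μ', poch z κ μ' * poch z' κ μ' * (skewDim κ l : ℂ) := by
      intro μ' hμ'
      have hc := (mem_above.mp hμ').2
      have := IH μ' l (by omega)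
      rw [this, hc]
      push_cast
      simp only [← hn, ← hm]
    rw [h1, Finset.sum_congr rfl h2]
    -- abbreviations
    set W' : ℂ := ((n:ℂ)+1)*(z*z' + (n:ℂ)) - ((m:ℂ)+1)*(((m:ℂ)+1) - 1 + z*z') with hW'
    rw [Finset.sum_add_distrib]
    -- Step 4 : first part
    have h4 : ∑ μ' ∈ above μ, W' * (skewDim μ' l : ℂ) = W' * (skewDim μ l : ℂ) := by
      rw [← Finset.mul_sum]
      rcases lt_or_eq_of_le hml with hlt | heq
      · congr 1
        rw [skewDim_rec_first hlt]
        push_cast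
        rfl
      · -- m = n : W' = 0
        have hW'0 : W' = 0 := by
          rw [hW', heq]
          ring
        rw [hW'0, zero_mul, zero_mul]
    -- Step 5 : split second part
    have h5 : ∑ μ' ∈ above μ, ∑ κ ∈ below μ', poch z κ μ' * poch z' κ μ' * (skewDim κ l : ℂ)
        = (∑ μ' ∈ above μ, poch z μ μ' * poch z' μ μ') * (skewDim μ l : ℂ)
          + ∑ μ' ∈ above μ, ∑ κ ∈ (below μ').erase μ,
              poch z κ μ' * poch z' κ μ' * (skewDim κ l : ℂ) := by
      rw [Finset.sum_mul, ← Finset.sum_add_distrib]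
      apply Finset.sum_congr rfl
      intro μ' hμ'
      have hμb : μ ∈ below μ' := mem_below.mpr (mem_above.mp hμ')
      rw [← Finset.add_sum_erase _ _ hμb]
    -- Step 6 : RHS reorganization
    have h6 : ∑ κ ∈ below μ, poch z κ μ * poch z' κ μ * (skewDim κ l : ℂ)
        = (∑ κ ∈ below μ, poch z κ μ * poch z' κ μ) * (skewDim μ l : ℂ)
          + ∑ κ ∈ below μ, ∑ τ ∈ (above κ).erase μ,
              poch z κ μ * poch z' κ μ * (skewDim τ l : ℂ) := by
      rw [Finset.sum_mul, ← Finset.sum_add_distrib]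
      apply Finset.sum_congr rfl
      intro κ hκ
      have hc := (mem_below.mp hκ).2
      have hrec : skewDim κ l = ∑ τ ∈ above κ, skewDim τ l :=
        skewDim_rec_first (by omega)
      have hμa : μ ∈ above κ := mem_above.mpr (mem_below.mp hκ)
      rw [hrec]
      push_cast
      rw [Finset.mul_sum, ← Finset.add_sum_erase _ _ hμa]
    -- Step 7 : cross terms agree
    have h7 : ∑ μ' ∈ above μ, ∑ κ ∈ (below μ').erase μ,
              poch z κ μ' * poch z' κ μ' * (skewDim κ l : ℂ)
        = ∑ κ ∈ below μ, ∑ τ ∈ (above κ).erase μ,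
              poch z κ μ * poch z' κ μ * (skewDim τ l : ℂ) := by
      apply pair_sum μ (fun a b c => poch z a b * poch z' a b * (skewDim c l : ℂ))
      intro μ' τ hμμ' hτμ' hne
      obtain ⟨-, -, d3⟩ := diamond_up hμμ' hτμ' hne
      rw [← d3, poch_diamond, poch_diamond]
    -- Step 8 : conclude with the corner identity
    rw [h4, h5, h6, h7]
    have hcorner := corner_identity μ z z'
    have hQ : ∑ μ' ∈ above μ, poch z μ μ' * poch z' μ μ'
        = (∑ κ ∈ below μ, poch z κ μ * poch z' κ μ) + (z*z' + 2*(m:ℂ)) := hcorner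
    rw [hQ]
    ring

/-! ### finsum conversions and assembly -/

lemma finsum_cond_eq_sum {p : YoungDiagram → Prop} {s : Finset YoungDiagram}
    (h : ∀ ν, p ν ↔ ν ∈ s) (f : YoungDiagram → ℂ) :
    (∑ᶠ (ν : YoungDiagram) (_ : p ν), f ν) = ∑ ν ∈ s, f ν := by
  rw [← finsum_mem_coe_finset]
  apply finsum_congr
  intro ν
  exact finsum_congr_Prop (propext ((h ν).trans Finset.mem_coe.symm)) (fun _ => rfl)

lemma finsum_covers_above (l : YoungDiagram) (f : YoungDiagram → ℂ) :
    (∑ᶠ (ν : YoungDiagram) (_ : Covers l ν), f ν) = ∑ ν ∈ above l, f ν :=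
  finsum_cond_eq_sum (fun ν => mem_above.symm) f

lemma finsum_covers_below (μ : YoungDiagram) (f : YoungDiagram → ℂ) :
    (∑ᶠ (κ : YoungDiagram) (_ : Covers κ μ), f κ) = ∑ κ ∈ below μ, f κ :=
  finsum_cond_eq_sum (fun κ => mem_below.symm) f

lemma dim_ne_zero (l : YoungDiagram) : (l.dim : ℂ) ≠ 0 := by
  have h := dim_pos l
  simp only [ne_eq, Nat.cast_eq_zero]
  omega

lemma FS_eq (μ l : YoungDiagram) :
    μ.FS l = (∏ i ∈ Finset.range μ.card, ((l.card : ℂ) - (i : ℂ))) * (μ.skewDim l : ℂ)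
      / (l.dim : ℂ) := rfl

lemma FS_zero_of_lt {μ l : YoungDiagram} (h : l.card < μ.card) : μ.FS l = 0 := by
  rw [FS_eq]
  have : (∏ i ∈ Finset.range μ.card, ((l.card : ℂ) - (i : ℂ))) = 0 :=
    Finset.prod_eq_zero (Finset.mem_range.mpr h) (by ring)
  rw [this, zero_mul, zero_div]

lemma below_card_zero {μ : YoungDiagram} (h : μ.card = 0) : below μ = ∅ := by
  apply Finset.eq_empty_of_forall_notMem
  intro κ hκ
  have := (mem_below.mp hκ).2
  omega

end YD

open YD

set_option maxHeartbeats 2000000 in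
open YoungDiagram in
/-- Action of `Tₙ - 1` (the up–down transition operator of the
z-measures, with up probabilities `p↑(λ,ν) = (z)_{ν/λ}(z')_{ν/λ} dim ν /((zz'+n)(n+1) dim λ)`
and down probabilities `p↓(ν,κ) = dim κ / dim ν`) on the Frobenius–Schur function `FS_μ`:
for `|μ| = m`, `|λ| = n` and `zz' + n ≠ 0`,
`(Tₙ FS_μ)(λ) - FS_μ(λ) = -(m(m-1+zz')/((n+1)(zz'+n))) FS_μ(λ)
   + ((n+1-m)/((n+1)(zz'+n))) ∑_{μ• ↗ μ} (z)_{μ/μ•}(z')_{μ/μ•} FS_{μ•}(λ)`. -/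
theorem updown_generator_on_FS (z z' : ℂ) (μ l : YoungDiagram) (m n : ℕ)
    (hm : μ.card = m) (hn : l.card = n) (hzz : z * z' + (n : ℂ) ≠ 0) :
    (∑ᶠ (ν : YoungDiagram) (_ : Covers l ν),
        (poch z l ν * poch z' l ν * (ν.dim : ℂ)
            / ((z * z' + (n : ℂ)) * ((n : ℂ) + 1) * (l.dim : ℂ)))
          * ∑ᶠ (κ : YoungDiagram) (_ : Covers κ ν), ((κ.dim : ℂ) / (ν.dim : ℂ)) * μ.FS κ)
      - μ.FS l
    = -((m : ℂ) * ((m : ℂ) - 1 + z * z') / (((n : ℂ) + 1) * (z * z' + (n : ℂ)))) * μ.FS l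
      + (((n : ℂ) + 1 - (m : ℂ)) / (((n : ℂ) + 1) * (z * z' + (n : ℂ))))
          * ∑ᶠ (κ : YoungDiagram) (_ : Covers κ μ),
              poch z κ μ * poch z' κ μ * κ.FS l := by
  subst hm hn
  rw [finsum_covers_above, finsum_covers_below]
  have hdiml : (l.dim : ℂ) ≠ 0 := dim_ne_zero l
  have hn1 : ((l.card : ℂ) + 1) ≠ 0 := by
    have : ((l.card : ℂ) + 1) = ((l.card + 1 : ℕ) : ℂ) := by push_cast; ring
    rw [this]
    simp only [ne_eq, Nat.cast_eq_zero]
    omega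
  by_cases hmn : μ.card ≤ l.card
  · -- main case
    have hInner : ∀ ν ∈ above l,
        (∑ᶠ (κ : YoungDiagram) (_ : Covers κ ν), ((κ.dim : ℂ) / (ν.dim : ℂ)) * μ.FS κ)
        = (∏ i ∈ Finset.range μ.card, ((l.card : ℂ) - (i : ℂ)))
            * (skewDim μ ν : ℂ) / (ν.dim : ℂ) := by
      intro ν hν
      have hνc := (mem_above.mp hν).2
      rw [finsum_covers_below]
      have hterm : ∀ κ ∈ below ν, ((κ.dim:ℂ)/(ν.dim:ℂ)) * μ.FS κ
          = (∏ i ∈ Finset.range μ.card, ((l.card : ℂ) - (i : ℂ)))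
              * (skewDim μ κ : ℂ) / (ν.dim : ℂ) := by
        intro κ hκ
        have hκc := (mem_below.mp hκ).2
        have hκcard : κ.card = l.card := by omega
        have hκdim : (κ.dim : ℂ) ≠ 0 := dim_ne_zero κ
        have hνdim : (ν.dim : ℂ) ≠ 0 := dim_ne_zero ν
        rw [FS_eq, hκcard]
        field_simp
      rw [Finset.sum_congr rfl hterm, ← Finset.sum_div, ← Finset.mul_sum]
      have hrec : skewDim μ ν = ∑ κ ∈ below ν, skewDim μ κ :=
        skewDim_rec_last (by omega)
      rw [hrec]
      push_cast
      rfl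
    rw [Finset.sum_congr rfl (fun ν hν => by rw [hInner ν hν])]
    have hLHSsum : ∑ ν ∈ above l,
        (poch z l ν * poch z' l ν * (ν.dim : ℂ)
            / ((z * z' + (l.card : ℂ)) * ((l.card : ℂ) + 1) * (l.dim : ℂ)))
          * ((∏ i ∈ Finset.range μ.card, ((l.card : ℂ) - (i : ℂ)))
              * (skewDim μ ν : ℂ) / (ν.dim : ℂ))
        = ((∏ i ∈ Finset.range μ.card, ((l.card : ℂ) - (i : ℂ)))
            / ((z * z' + (l.card : ℂ)) * ((l.card : ℂ) + 1) * (l.dim : ℂ)))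
          * ∑ ν ∈ above l, poch z l ν * poch z' l ν * (skewDim μ ν : ℂ) := by
      rw [Finset.mul_sum]
      apply Finset.sum_congr rfl
      intro ν hν
      have hνdim : (ν.dim : ℂ) ≠ 0 := dim_ne_zero ν
      field_simp
    rw [hLHSsum, master_aux z z' (l.card + 1 - μ.card) μ l le_rfl]
    -- right side FS rewriting
    rcases Nat.eq_zero_or_pos μ.card with hm0 | hm1
    · -- m = 0
      rw [below_card_zero hm0, hm0]
      simp only [Finset.sum_empty, Finset.range_zero, Finset.prod_empty, Nat.cast_zero]
      rw [FS_eq, hm0]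
      simp only [Finset.range_zero, Finset.prod_empty, Nat.cast_zero]
      field_simp
      ring
    · -- m ≥ 1
      have hsplit : (∏ i ∈ Finset.range μ.card, ((l.card : ℂ) - (i : ℂ)))
          = (∏ i ∈ Finset.range (μ.card - 1), ((l.card : ℂ) - (i : ℂ)))
            * ((l.card : ℂ) + 1 - (μ.card : ℂ)) := by
        have h1 : μ.card = (μ.card - 1) + 1 := by omega
        rw [h1, Finset.prod_range_succ]
        congr 1
        have : ((μ.card - 1 : ℕ) : ℂ) = (μ.card : ℂ) - 1 := by
          have : ((μ.card - 1 : ℕ) : ℂ) = ((μ.card : ℕ) : ℂ) - ((1 : ℕ) : ℂ) :=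
            Nat.cast_sub (by omega)
          rw [this]; norm_num
        rw [← h1, this]
        ring
      have hRHS : ∀ κ ∈ below μ, poch z κ μ * poch z' κ μ * κ.FS l
          = poch z κ μ * poch z' κ μ
            * ((∏ i ∈ Finset.range (μ.card - 1), ((l.card : ℂ) - (i : ℂ)))
                * (skewDim κ l : ℂ) / (l.dim : ℂ)) := by
        intro κ hκ
        have hκc := (mem_below.mp hκ).2
        have hκcard : κ.card = μ.card - 1 := by omega
        rw [FS_eq, hκcard]
      rw [Finset.sum_congr rfl hRHS, FS_eq μ l, hsplit]
      have hSpull : ∑ κ ∈ below μ, poch z κ μ * poch z' κ μ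
            * ((∏ i ∈ Finset.range (μ.card - 1), ((l.card : ℂ) - (i : ℂ)))
                * (skewDim κ l : ℂ) / (l.dim : ℂ))
          = ((∏ i ∈ Finset.range (μ.card - 1), ((l.card : ℂ) - (i : ℂ))) / (l.dim : ℂ))
            * ∑ κ ∈ below μ, poch z κ μ * poch z' κ μ * (skewDim κ l : ℂ) := by
        rw [Finset.mul_sum]
        apply Finset.sum_congr rfl
        intro κ hκ
        field_simp
      rw [hSpull]
      field_simp
      ring
  · -- degenerate case m > n
    push_neg at hmn
    have hFSμ : ∀ κ : YoungDiagram, κ.card = l.card → μ.FS κ = 0 :=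
      fun κ hκ => FS_zero_of_lt (by omega)
    have hInner0 : ∀ ν ∈ above l,
        (∑ᶠ (κ : YoungDiagram) (_ : Covers κ ν), ((κ.dim : ℂ) / (ν.dim : ℂ)) * μ.FS κ) = 0 := by
      intro ν hν
      have hνc := (mem_above.mp hν).2
      rw [finsum_covers_below]
      apply Finset.sum_eq_zero
      intro κ hκ
      have hκc := (mem_below.mp hκ).2
      rw [hFSμ κ (by omega), mul_zero]
    rw [Finset.sum_congr rfl (fun ν hν => by rw [hInner0 ν hν, mul_zero]),
      Finset.sum_eq_zero (fun ν _ => rfl), hFSμ l rfl]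
    rcases Nat.lt_or_ge l.card (μ.card - 1) with hdeg | hdeg
    · -- m > n + 1 : all FS κ l vanish
      have : ∑ κ ∈ below μ, poch z κ μ * poch z' κ μ * κ.FS l = 0 := by
        apply Finset.sum_eq_zero
        intro κ hκ
        have hκc := (mem_below.mp hκ).2
        rw [FS_zero_of_lt (by omega), mul_zero]
      rw [this]
      ring
    · -- m = n + 1 : coefficient vanishes
      have hcm : μ.card = l.card + 1 := by omega
      have hcoef : ((l.card : ℂ) + 1 - (μ.card : ℂ)) = 0 := by
        rw [hcm]; push_cast; ring
      rw [hcoef]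
      simp
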